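/- For every positive integer C, the function g₂(C, w) := (1 − (1/6 + (5/6)·Σ_{q=0}^{C} (1/q!)·(6w/5)^q)^{−1}) / w is monotone decreasing in w on (0, ∞); that is, for all real 0 < w ≤ w′, g₂(C, w) ≥ g₂(C, w′). -/

import Mathlib

open Finset

noncomputable def Afun (C : ℕ) (x : ℝ) : ℝ :=
  ∑ q ∈ Finset.range (C + 1), (1 / (Nat.factorial q : ℝ)) * x ^ q

noncomputable def Lfun (C : ℕ) (x : ℝ) : ℝ :=
  ∑ q ∈ Finset.range (C + 1), (q : ℝ) / (Nat.factorial q : ℝ) * x ^ q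

lemma Afun_ge (C : ℕ) (hC : 1 ≤ C) {x : ℝ} (hx : 0 ≤ x) : 1 + x ≤ Afun C x := by
  have hsub : Finset.range 2 ⊆ Finset.range (C + 1) := Finset.range_subset_range.mpr (by omega)
  have h2 : ∑ q ∈ Finset.range 2, (1 / (Nat.factorial q : ℝ)) * x ^ q = 1 + x := by
    simp [Finset.sum_range_succ, Nat.factorial]
  calc 1 + x = ∑ q ∈ Finset.range 2, (1 / (Nat.factorial q : ℝ)) * x ^ q := h2.symm
    _ ≤ Afun C x := Finset.sum_le_sum_of_subset_of_nonneg hsub (by intro i _ _; positivity)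

lemma Qlem {x : ℝ} (hx : 0 ≤ x) : ∀ C, 2 ≤ C →
    Lfun C x + (5/3) * x ^ (C + 1) / (Nat.factorial C : ℝ) + (5/6) * x ^ 2
      ≤ (1 + (5/3) * x) * (Afun C x - 1) := by
  intro C hC
  induction C, hC using Nat.le_induction with
  | base =>
      simp only [Lfun, Afun, Finset.sum_range_succ, Finset.sum_range_zero]
      norm_num [Nat.factorial]
      nlinarith [sq_nonneg x, pow_nonneg hx 3]
  | succ n hn ih =>
      have hfp : (0:ℝ) < (Nat.factorial n : ℝ) := by exact_mod_cast Nat.factorial_pos n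
      have hfp1 : (0:ℝ) < (Nat.factorial (n+1) : ℝ) := by exact_mod_cast Nat.factorial_pos (n+1)
      have hfs : (Nat.factorial (n+1) : ℝ) = (n+1) * (Nat.factorial n : ℝ) := by
        exact_mod_cast Nat.factorial_succ n
      have hL : Lfun (n+1) x = Lfun n x + ((n+1 : ℕ) : ℝ) / (Nat.factorial (n+1) : ℝ) * x ^ (n+1) := by
        simp [Lfun, Finset.sum_range_succ]
      have hA : Afun (n+1) x = Afun n x + (1 / (Nat.factorial (n+1) : ℝ)) * x ^ (n+1) := by
        simp [Afun, Finset.sum_range_succ]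
      have hterm : ((n+1 : ℕ) : ℝ) / (Nat.factorial (n+1) : ℝ) = 1 / (Nat.factorial n : ℝ) := by
        rw [hfs]; push_cast; field_simp
      rw [← sub_nonpos]
      have E1 : Lfun (n+1) x + (5/3) * x ^ (n+1+1) / (Nat.factorial (n+1) : ℝ) + (5/6) * x ^ 2
            - (1 + (5/3) * x) * (Afun (n+1) x - 1)
          = (Lfun n x + (5/3) * x ^ (n+1) / (Nat.factorial n : ℝ) + (5/6) * x ^ 2
              - (1 + (5/3) * x) * (Afun n x - 1))
            - (2/3) * (x ^ (n+1) / (Nat.factorial n : ℝ))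
            - x ^ (n+1) / (Nat.factorial (n+1) : ℝ) := by
        rw [hL, hA, hterm]; ring
      rw [E1]
      have hd := sub_nonpos.mpr ih
      have h5 : (0:ℝ) ≤ x ^ (n+1) / (Nat.factorial n : ℝ) := by positivity
      have h4 : (0:ℝ) ≤ x ^ (n+1) / (Nat.factorial (n+1) : ℝ) := by positivity
      linarith

lemma keylem (C : ℕ) (hC : 1 ≤ C) {x : ℝ} (hx : 0 ≤ x) :
    Lfun C x ≤ (Afun C x - 1) + (5/6) * (Afun C x - 1) ^ 2 := by
  rcases eq_or_lt_of_le hC with h1 | h2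
  · subst h1
    simp only [Lfun, Afun, Finset.sum_range_succ, Finset.sum_range_zero]
    norm_num [Nat.factorial]
    nlinarith [sq_nonneg x]
  · have hQ := Qlem hx C h2
    have hres : (0:ℝ) ≤ (5/3) * x ^ (C+1) / (Nat.factorial C : ℝ) := by positivity
    nlinarith [sq_nonneg (Afun C x - 1 - x)]

noncomputable def Ffun (C : ℕ) (w : ℝ) : ℝ :=
  1 / 6 + 5 / 6 * ∑ q ∈ Finset.range (C + 1), (1 / (Nat.factorial q : ℝ)) * (6 * w / 5) ^ q

noncomputable def Dfun (C : ℕ) (w : ℝ) : ℝ :=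
  5 / 6 * ∑ q ∈ Finset.range (C + 1),
    (1 / (Nat.factorial q : ℝ)) * ((q : ℝ) * (6 * w / 5) ^ (q - 1) * (6 / 5))

lemma Ffun_eq (C : ℕ) (w : ℝ) : Ffun C w = 1 / 6 + 5 / 6 * Afun C (6 * w / 5) := rfl

lemma hasDerivAt_Ffun (C : ℕ) (w : ℝ) : HasDerivAt (Ffun C) (Dfun C w) w := by
  have h1 : HasDerivAt (fun w : ℝ => 6 * w / 5) (6 / 5) w := by
    simpa using ((hasDerivAt_id w).const_mul (6:ℝ)).div_const 5
  have hsum : HasDerivAt (fun w : ℝ => ∑ q ∈ Finset.range (C + 1),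
      (1 / (Nat.factorial q : ℝ)) * (6 * w / 5) ^ q)
      (∑ q ∈ Finset.range (C + 1),
        (1 / (Nat.factorial q : ℝ)) * ((q : ℝ) * (6 * w / 5) ^ (q - 1) * (6 / 5))) w :=
    HasDerivAt.fun_sum fun q _ => (h1.pow q).const_mul _
  exact (hsum.const_mul (5/6 : ℝ)).const_add (1/6 : ℝ)

lemma Ffun_ge_one (C : ℕ) (hC : 1 ≤ C) {w : ℝ} (hw : 0 ≤ w) : 1 ≤ Ffun C w := by
  have hx : (0:ℝ) ≤ 6 * w / 5 := by positivity
  have h := Afun_ge C hC hx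
  rw [Ffun_eq]
  nlinarith

lemma wD_le (C : ℕ) (hC : 1 ≤ C) {w : ℝ} (hw : 0 ≤ w) :
    w * Dfun C w ≤ Ffun C w * (Ffun C w - 1) := by
  have hx : (0:ℝ) ≤ 6 * w / 5 := by positivity
  have hwD : w * Dfun C w = 5 / 6 * Lfun C (6 * w / 5) := by
    unfold Dfun Lfun
    rw [Finset.mul_sum, Finset.mul_sum, Finset.mul_sum]
    apply Finset.sum_congr rfl
    intro q _
    rcases q with _ | p
    · simp
    · have h2 : (6 * w / 5) ^ (p + 1) = (6 * w / 5) ^ p * (6 * w / 5) := by ring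
      rw [h2]
      simp only [Nat.add_sub_cancel]
      push_cast
      ring
  have hFF : Ffun C w * (Ffun C w - 1)
      = 5 / 6 * ((Afun C (6 * w / 5) - 1) + (5/6) * (Afun C (6 * w / 5) - 1) ^ 2) := by
    rw [Ffun_eq]
    show (1 / 6 + 5 / 6 * Afun C (6 * w / 5)) * (1 / 6 + 5 / 6 * Afun C (6 * w / 5) - 1) = _
    ring
  rw [hwD, hFF]
  have := keylem C hC hx
  linarith

/-- Fact C.4: `g₂(C, w) = (1 - (1/6 + (5/6)∑_{q=0}^C (6w/5)^q/q!)⁻¹)/w` is monotone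
decreasing in `w`. -/
theorem stmt_4 (C : ℕ) (hC : 0 < C) (w w' : ℝ) (hw : 0 < w) (hww' : w ≤ w') :
    (1 - (1 / 6 + (5 / 6) * ∑ q ∈ Finset.range (C + 1),
        (1 / (Nat.factorial q : ℝ)) * (6 * w / 5) ^ q)⁻¹) / w
      ≥ (1 - (1 / 6 + (5 / 6) * ∑ q ∈ Finset.range (C + 1),
        (1 / (Nat.factorial q : ℝ)) * (6 * w' / 5) ^ q)⁻¹) / w' := by
  have hgd : ∀ u : ℝ, 0 < u → HasDerivAt (fun v : ℝ => (1 - (Ffun C v)⁻¹) / v)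
      ((Dfun C u / (Ffun C u) ^ 2 * u - (1 - (Ffun C u)⁻¹) * 1) / u ^ 2) u := by
    intro u hu
    have hF1 : 1 ≤ Ffun C u := Ffun_ge_one C hC hu.le
    have hFne : Ffun C u ≠ 0 := by linarith
    have hInv : HasDerivAt (fun v : ℝ => (Ffun C v)⁻¹)
        (-(Dfun C u) / (Ffun C u) ^ 2) u := (hasDerivAt_Ffun C u).inv hFne
    have hNum : HasDerivAt (fun v : ℝ => 1 - (Ffun C v)⁻¹)
        (Dfun C u / (Ffun C u) ^ 2) u := by
      have := (hasDerivAt_const u (1:ℝ)).fun_sub hInv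
      simpa [neg_div] using this
    exact hNum.div (hasDerivAt_id u) hu.ne'
  have hderiv_nonpos : ∀ u ∈ interior (Set.Ioi (0:ℝ)),
      deriv (fun v : ℝ => (1 - (Ffun C v)⁻¹) / v) u ≤ 0 := by
    rw [interior_Ioi]
    intro u hu
    rw [Set.mem_Ioi] at hu
    rw [(hgd u hu).deriv]
    have hF1 : 1 ≤ Ffun C u := Ffun_ge_one C hC hu.le
    have hFpos : 0 < Ffun C u := by linarith
    have hkey := wD_le C hC hu.le
    have e : Dfun C u / (Ffun C u) ^ 2 * u - (1 - (Ffun C u)⁻¹) * 1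
        = (u * Dfun C u - Ffun C u * (Ffun C u - 1)) / (Ffun C u) ^ 2 := by
      field_simp
    rw [e]
    have hnum : u * Dfun C u - Ffun C u * (Ffun C u - 1) ≤ 0 := by linarith
    have hden : (0:ℝ) ≤ (Ffun C u) ^ 2 := by positivity
    have h1 : (u * Dfun C u - Ffun C u * (Ffun C u - 1)) / Ffun C u ^ 2 ≤ 0 :=
      div_nonpos_iff.mpr (Or.inr ⟨hnum, hden⟩)
    exact div_nonpos_iff.mpr (Or.inr ⟨h1, by positivity⟩)
  have hdiff : DifferentiableOn ℝ (fun v : ℝ => (1 - (Ffun C v)⁻¹) / v)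
      (interior (Set.Ioi (0:ℝ))) := by
    rw [interior_Ioi]
    intro u hu
    exact ((hgd u (Set.mem_Ioi.mp hu)).differentiableAt).differentiableWithinAt
  have hcont : ContinuousOn (fun v : ℝ => (1 - (Ffun C v)⁻¹) / v) (Set.Ioi (0:ℝ)) :=
    fun u hu => ((hgd u (Set.mem_Ioi.mp hu)).differentiableAt).continuousAt.continuousWithinAt
  have anti : AntitoneOn (fun v : ℝ => (1 - (Ffun C v)⁻¹) / v) (Set.Ioi (0:ℝ)) :=
    antitoneOn_of_deriv_nonpos (convex_Ioi 0) hcont hdiff hderiv_nonpos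
  have := anti (Set.mem_Ioi.mpr hw) (Set.mem_Ioi.mpr (lt_of_lt_of_le hw hww')) hww'
  exact this
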